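/- (Rackoff-style recurrence for NB-VAS) Let V = (T, v_init) be an NB-VAS of dimension d with target v_f, and let N = |v_f| + max over (t_b,t_nb) ∈ T of (|t_b| + |t_nb|) where |·| is the 1-norm. Define f(i) as the supremum over subsets J ⊆ [1,d] of size i and vectors v ∈ ℕ^d admitting a J-covering path, of the length of the shortest J-covering relaxed path from v. Then for all 0 ≤ i < d, f(i+1) ≤ (N · f(i))^{i+1} + f(i). -/

import Mathlib

/-- Relaxed step of an NB-VAS transition `t = (t_b, t_nb)`. -/
def NBVAS.RelaxedStep {d : ℕ} (t : (Fin d → ℤ) × (Fin d → ℕ))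
    (v v' : Fin d → ℕ) : Prop :=
  ∀ i, (v' i : ℤ) = max 0 ((v i : ℤ) + t.1 i - (t.2 i : ℤ))

/-- A `J`-covering relaxed path of `n` vectors starting at `v`
(with target `vf`). -/
def NBVAS.CovPath {d : ℕ} (T : Set ((Fin d → ℤ) × (Fin d → ℕ)))
    (vf : Fin d → ℕ) (J : Finset (Fin d)) (v : Fin d → ℕ) (n : ℕ) : Prop :=
  1 ≤ n ∧ ∃ vs : ℕ → Fin d → ℕ, vs 0 = v ∧
    (∀ i, i + 1 < n → ∃ t ∈ T, NBVAS.RelaxedStep t (vs i) (vs (i + 1)) ∧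
      ∀ j ∈ J, 0 ≤ (vs i j : ℤ) + t.1 j) ∧
    (∀ j ∈ J, vf j ≤ vs (n - 1) j)

namespace NBVASAux

open NBVAS

/-- The deterministic relaxed-step function. -/
def stepF {d : ℕ} (t : (Fin d → ℤ) × (Fin d → ℕ)) (v : Fin d → ℕ) : Fin d → ℕ :=
  fun j => ((v j : ℤ) + t.1 j - t.2 j).toNat

lemma stepF_relaxed {d : ℕ} (t : (Fin d → ℤ) × (Fin d → ℕ)) (v : Fin d → ℕ) :
    RelaxedStep t v (stepF t v) := by
  intro j
  simp only [stepF]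
  omega

lemma relaxed_coord {d : ℕ} {t : (Fin d → ℤ) × (Fin d → ℕ)} {v v' w w' : Fin d → ℕ}
    (h : RelaxedStep t v v') (h' : RelaxedStep t w w') {j : Fin d} (hj : v j = w j) :
    v' j = w' j := by
  have h1 := h j
  have h2 := h' j
  rw [hj] at h1
  exact_mod_cast h1.trans h2.symm

/-- Iterating the step function. -/
def iter {d : ℕ} (t : ℕ → (Fin d → ℤ) × (Fin d → ℕ)) (w0 : Fin d → ℕ) : ℕ → Fin d → ℕ
  | 0 => w0
  | r + 1 => stepF (t r) (iter t w0 r)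

/-- Shortcut lemma: if a `J`-covering path repeats its `J`-projection,
it can be shortened. -/
lemma shortcut {d : ℕ} {T : Set ((Fin d → ℤ) × (Fin d → ℕ))} {vf : Fin d → ℕ}
    {J : Finset (Fin d)} {n k l : ℕ} (vs : ℕ → Fin d → ℕ)
    (hsteps : ∀ i, i + 1 < n → ∃ t ∈ T, RelaxedStep t (vs i) (vs (i + 1)) ∧
      ∀ j ∈ J, 0 ≤ (vs i j : ℤ) + t.1 j)
    (hcov : ∀ j ∈ J, vf j ≤ vs (n - 1) j)
    (hkl : k < l) (hln : l < n)
    (heq : ∀ j ∈ J, vs k j = vs l j) :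
    CovPath T vf J (vs 0) (k + (n - l)) := by
  classical
  choose! t ht hstep hcorr using hsteps
  set ws : ℕ → Fin d → ℕ := iter (fun r => t (l + r)) (vs k) with hws
  have hws0 : ws 0 = vs k := rfl
  have hwssucc : ∀ r, ws (r + 1) = stepF (t (l + r)) (ws r) := fun r => rfl
  have hproj : ∀ r, l + r < n → ∀ j ∈ J, ws r j = vs (l + r) j := by
    intro r
    induction r with
    | zero =>
      intro _ j hj
      simpa [hws0] using heq j hj
    | succ r ih =>
      intro hr j hj
      have hr' : l + r < n := by omega
      have h1 : l + r + 1 < n := by omega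
      have := relaxed_coord (stepF_relaxed (t (l + r)) (ws r)) (hstep (l + r) h1)
        (ih hr' j hj)
      rw [hwssucc r]
      exact this
  unfold NBVAS.CovPath
  refine ⟨by omega, fun r => if r ≤ k then vs r else ws (r - k), by simp, ?_, ?_⟩
  · intro r hr
    beta_reduce
    by_cases hrk : r + 1 ≤ k
    · refine ⟨t r, ht r (by omega), ?_, ?_⟩
      · rw [if_pos (by omega : r ≤ k), if_pos hrk]
        exact hstep r (by omega)
      · intro j hj
        rw [if_pos (by omega : r ≤ k)]
        exact hcorr r (by omega) j hj
    · have hrk' : k ≤ r := by omega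
      have e1 : (if r ≤ k then vs r else ws (r - k)) = ws (r - k) := by
        rcases Nat.eq_or_lt_of_le hrk' with h | h
        · rw [if_pos (by omega : r ≤ k), ← h, Nat.sub_self, hws0]
        · rw [if_neg (by omega)]
      have hq1 : l + (r - k) + 1 < n := by omega
      refine ⟨t (l + (r - k)), ht _ hq1, ?_, ?_⟩
      · rw [e1, if_neg (by omega : ¬ r + 1 ≤ k), show r + 1 - k = (r - k) + 1 by omega,
          hwssucc]
        exact stepF_relaxed _ _
      · intro j hj
        rw [e1, hproj (r - k) (by omega) j hj]
        exact hcorr (l + (r - k)) hq1 j hj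
  · intro j hj
    beta_reduce
    have hproj' := hproj (n - l - 1) (by omega) j hj
    have hval : (if k + (n - l) - 1 ≤ k then vs (k + (n - l) - 1) else ws (k + (n - l) - 1 - k)) j
        = ws (n - l - 1) j := by
      by_cases h2 : n - l = 1
      · rw [if_pos (by omega), show k + (n - l) - 1 = k by omega, show n - l - 1 = 0 by omega,
          hws0]
      · rw [if_neg (by omega), show k + (n - l) - 1 - k = n - l - 1 by omega]
    rw [hval, hproj', show l + (n - l - 1) = n - 1 by omega]
    exact hcov j hj

/-- Counting lemma: pairwise `J`-distinct, `J`-bounded vectors are few. -/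
lemma card_bound {d : ℕ} {J : Finset (Fin d)} {M n : ℕ} (g : ℕ → Fin d → ℕ)
    (hb : ∀ k, k < n → ∀ j ∈ J, g k j < M)
    (hinj : ∀ k l, k < n → l < n → k ≠ l → ∃ j ∈ J, g k j ≠ g l j) :
    n ≤ M ^ J.card := by
  classical
  have hI : Function.Injective
      (fun p : Fin n => fun j : J => (⟨g p j, hb p p.2 j j.2⟩ : Fin M)) := by
    intro a b hab
    by_contra hne
    obtain ⟨j, hj, hjne⟩ := hinj a b a.2 b.2 (fun h => hne (Fin.ext h))
    apply hjne
    have h2 := congrFun hab ⟨j, hj⟩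
    exact congrArg Fin.val h2
  calc n = Fintype.card (Fin n) := (Fintype.card_fin n).symm
    _ ≤ Fintype.card (↥J → Fin M) := Fintype.card_le_of_injective _ hI
    _ = M ^ J.card := by simp [Fintype.card_fun]

end NBVASAux

open NBVASAux NBVAS in
/-- the Rackoff-style recurrence
`f(i+1) ≤ (N·f(i))^(i+1) + f(i)` for shortest covering paths in an NB-VAS. -/
theorem rackoff_recurrence
    {d : ℕ} (T : Finset ((Fin d → ℤ) × (Fin d → ℕ))) (vf : Fin d → ℕ)
    (N : ℕ)
    (hN : N = (∑ j, vf j) +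
      T.sup (fun t => (∑ j, (t.1 j).natAbs) + ∑ j, t.2 j))
    (f : ℕ → ℕ) (i : ℕ) (hid : i < d)
    (hf : ∀ (J : Finset (Fin d)) (v : Fin d → ℕ), J.card = i →
      (∃ n, NBVAS.CovPath (↑T) vf J v n) →
      ∃ n, NBVAS.CovPath (↑T) vf J v n ∧ n ≤ f i) :
    ∀ (J : Finset (Fin d)) (v : Fin d → ℕ), J.card = i + 1 →
      (∃ n, NBVAS.CovPath (↑T) vf J v n) →
      ∃ n, NBVAS.CovPath (↑T) vf J v n ∧ n ≤ (N * f i) ^ (i + 1) + f i := by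
  intro J v hJ hex
  classical
  set S := ∑ j, vf j with hS
  set C := T.sup (fun t => (∑ j, (t.1 j).natAbs) + ∑ j, t.2 j) with hC
  set M := N * f i with hM
  -- minimal length covering path
  set n := Nat.find hex with hn_def
  have hn : NBVAS.CovPath (↑T) vf J v n := Nat.find_spec hex
  have hmin : ∀ m, m < n → ¬ NBVAS.CovPath (↑T) vf J v m := fun m hm => Nat.find_min hex hm
  obtain ⟨hn1, vs, hvs0, hsteps, hcov⟩ := hn
  -- no repeated J-projection on a minimal path
  have hinj2 : ∀ k l, k < l → l < n → ¬ ∀ j ∈ J, vs k j = vs l j := by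
    intro k l hkl hln hcon
    have hsc := shortcut vs hsteps hcov hkl hln hcon
    rw [hvs0] at hsc
    exact hmin _ (by omega) hsc
  have hinj : ∀ k l, k < n → l < n → k ≠ l → ∃ j ∈ J, vs k j ≠ vs l j := by
    intro k l hk hl hkl
    rcases Nat.lt_or_ge k l with h | h
    · have h2 := hinj2 k l h hl
      push_neg at h2
      exact h2
    · have h' : l < k := by omega
      have h2 := hinj2 l k h' hk
      push_neg at h2
      obtain ⟨j, hj, hne⟩ := h2
      exact ⟨j, hj, hne.symm⟩
  -- transition bounds
  have htb : ∀ t ∈ T, ∀ j, (t.1 j).natAbs + t.2 j ≤ C := by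
    intro t ht j
    have h1 : (∑ j, (t.1 j).natAbs) + ∑ j, t.2 j ≤ C := by
      rw [hC]
      exact Finset.le_sup (f := fun t => (∑ j, (t.1 j).natAbs) + ∑ j, t.2 j) ht
    have h2 : (t.1 j).natAbs ≤ ∑ j, (t.1 j).natAbs :=
      Finset.single_le_sum (f := fun j => (t.1 j).natAbs) (fun _ _ => Nat.zero_le _)
        (Finset.mem_univ j)
    have h3 : t.2 j ≤ ∑ j, t.2 j :=
      Finset.single_le_sum (f := fun j => t.2 j) (fun _ _ => Nat.zero_le _)
        (Finset.mem_univ j)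
    omega
  by_cases hbdd : ∀ k, k < n → ∀ j ∈ J, vs k j < M
  · -- bounded case: the minimal path itself is short enough
    have hcount : n ≤ M ^ J.card := card_bound vs hbdd hinj
    rw [hJ] at hcount
    exact ⟨n, Nat.find_spec hex, by omega⟩
  · push_neg at hbdd
    have hexm : ∃ m, m < n ∧ ∃ j ∈ J, M ≤ vs m j := by
      obtain ⟨k, hk, j, hj, hkj⟩ := hbdd
      exact ⟨k, hk, j, hj, hkj⟩
    set m := Nat.find hexm with hm_def
    obtain ⟨hmn, j0, hj0, hMj0⟩ := Nat.find_spec hexm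
    rw [← hm_def] at hmn hMj0
    have hmbdd : ∀ k, k < m → ∀ j ∈ J, vs k j < M := by
      intro k hk j hj
      by_contra hle
      exact Nat.find_min hexm hk ⟨by omega, j, hj, by omega⟩
    -- prefix bound
    have hpre : m ≤ M ^ (i + 1) := by
      have := card_bound (n := m) vs (fun k hk => hmbdd k hk)
        (fun k l hk hl => hinj k l (by omega) (by omega))
      rwa [hJ] at this
    -- the suffix is a J'-covering path from vs m
    set J' := J.erase j0 with hJ'
    have hJ'card : J'.card = i := by
      rw [hJ', Finset.card_erase_of_mem hj0, hJ]
      omega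
    have hsub : ∀ j ∈ J', j ∈ J := fun j hj => Finset.mem_of_mem_erase hj
    have hsuffix : NBVAS.CovPath (↑T) vf J' (vs m) (n - m) := by
      unfold NBVAS.CovPath
      refine ⟨by omega, fun r => vs (m + r), rfl, ?_, ?_⟩
      · intro r hr
        beta_reduce
        obtain ⟨t, ht, h1, h2⟩ := hsteps (m + r) (by omega)
        exact ⟨t, ht, h1, fun j hj => h2 j (hsub j hj)⟩
      · intro j hj
        beta_reduce
        rw [show m + (n - m - 1) = n - 1 by omega]
        exact hcov j (hsub j hj)
    obtain ⟨n', hn', hn'f⟩ := hf J' (vs m) hJ'card ⟨n - m, hsuffix⟩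
    obtain ⟨hn'1, ws, hws0, hwsteps, hwcov⟩ := hn'
    -- lower bound on coordinate j0 along the short J'-covering path
    have hws : ∀ r, r < n' → (M : ℤ) - r * C ≤ ws r j0 := by
      intro r
      induction r with
      | zero =>
        intro _
        rw [hws0]
        have hc : (M : ℤ) ≤ (vs m j0 : ℤ) := by exact_mod_cast hMj0
        push_cast
        linarith
      | succ r ih =>
        intro hr
        obtain ⟨t, ht, hstep, _⟩ := hwsteps r (by omega)
        have hb := htb t ht j0
        have h1 := hstep j0
        have h2 := ih (by omega)
        have hb' : ((t.1 j0).natAbs : ℤ) + (t.2 j0 : ℤ) ≤ (C : ℤ) := by exact_mod_cast hb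
        have habs : -(((t.1 j0).natAbs : ℤ)) ≤ t.1 j0 := by omega
        have hmax : (0 : ℤ) ⊔ ((ws r j0 : ℤ) + t.1 j0 - t.2 j0)
            ≥ (ws r j0 : ℤ) + t.1 j0 - t.2 j0 := le_max_right _ _
        have h2' : (t.2 j0 : ℤ) ≥ 0 := Int.natCast_nonneg _
        have hexp : ((r : ℤ) + 1) * C = (r : ℤ) * C + C := by ring
        push_cast
        rw [h1]
        push_cast at h2
        linarith
    -- build the combined path of length m + n'
    refine ⟨m + n', ?_, by omega⟩
    unfold NBVAS.CovPath
    refine ⟨by omega, fun r => if r < m then vs r else ws (r - m), ?_, ?_, ?_⟩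
    · beta_reduce
      by_cases h0 : 0 < m
      · rw [if_pos h0, hvs0]
      · rw [if_neg h0, show (0 : ℕ) - m = 0 by omega, hws0,
          show m = 0 by omega, hvs0]
    · intro r hr
      beta_reduce
      rcases lt_trichotomy (r + 1) m with h | h | h
      · obtain ⟨t, ht, h1, h2⟩ := hsteps r (by omega)
        refine ⟨t, ht, ?_, ?_⟩
        · rw [if_pos (by omega : r < m), if_pos h]
          exact h1
        · intro j hj
          rw [if_pos (by omega : r < m)]
          exact h2 j hj
      · obtain ⟨t, ht, h1, h2⟩ := hsteps r (by omega)
        refine ⟨t, ht, ?_, ?_⟩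
        · rw [if_pos (by omega : r < m), if_neg (by omega : ¬ r + 1 < m),
            show r + 1 - m = 0 by omega, hws0, ← h]
          exact h1
        · intro j hj
          rw [if_pos (by omega : r < m)]
          exact h2 j hj
      · have hrm : m ≤ r := by omega
        obtain ⟨t, ht, h1, h2⟩ := hwsteps (r - m) (by omega)
        refine ⟨t, ht, ?_, ?_⟩
        · rw [if_neg (by omega : ¬ r < m), if_neg (by omega : ¬ r + 1 < m),
            show r + 1 - m = (r - m) + 1 by omega]
          exact h1
        · intro j hj
          rw [if_neg (by omega : ¬ r < m)]
          by_cases hjj : j = j0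
          · subst hjj
            have hb := htb t ht j
            have hlow := hws (r - m) (by omega)
            have hmul : C * ((r - m) + 1) ≤ N * f i :=
              Nat.mul_le_mul (by omega) (by omega : r - m + 1 ≤ f i)
            have hb' : ((t.1 j).natAbs : ℤ) + (t.2 j : ℤ) ≤ (C : ℤ) := by exact_mod_cast hb
            have habs : -(((t.1 j).natAbs : ℤ)) ≤ t.1 j := by omega
            have hmul' : (C : ℤ) * (((r - m : ℕ) : ℤ) + 1) ≤ (N : ℤ) * (f i : ℤ) := by
              exact_mod_cast hmul
            have hMc : (M : ℤ) = (N : ℤ) * (f i : ℤ) := by exact_mod_cast hM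
            have hexp : (C : ℤ) * (((r - m : ℕ) : ℤ) + 1) = ((r - m : ℕ) : ℤ) * C + C := by
              ring
            have h2' : (t.2 j : ℤ) ≥ 0 := Int.natCast_nonneg _
            linarith
          · exact h2 j (Finset.mem_erase.mpr ⟨hjj, hj⟩)
    · intro j hj
      beta_reduce
      rw [if_neg (by omega : ¬ m + n' - 1 < m), show m + n' - 1 - m = n' - 1 by omega]
      by_cases hjj : j = j0
      · subst hjj
        have hlow := hws (n' - 1) (by omega)
        have hvfS : vf j ≤ S := by
          rw [hS]
          exact Finset.single_le_sum (f := fun j => vf j) (fun _ _ => Nat.zero_le _)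
            (Finset.mem_univ j)
        have key : vf j + C * (n' - 1) ≤ N * f i := by
          have ha : S ≤ S * n' := Nat.le_mul_of_pos_right S (by omega)
          have hb2 : C * (n' - 1) + C = C * n' := by
            have : n' - 1 + 1 = n' := by omega
            calc C * (n' - 1) + C = C * (n' - 1 + 1) := by ring
              _ = C * n' := by rw [this]
          have hc2 : S * n' + C * n' = N * n' := by rw [hN]; ring
          have hd2 : N * n' ≤ N * f i := Nat.mul_le_mul_left _ hn'f
          omega
        have keyZ : (vf j : ℤ) + (C : ℤ) * (((n' - 1 : ℕ) : ℤ)) ≤ (N : ℤ) * (f i : ℤ) := by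
          exact_mod_cast key
        have hMc : (M : ℤ) = (N : ℤ) * (f i : ℤ) := by exact_mod_cast hM
        have : (vf j : ℤ) ≤ ws (n' - 1) j := by
          have hcomm : (C : ℤ) * (((n' - 1 : ℕ) : ℤ)) = (((n' - 1 : ℕ) : ℤ)) * C := by ring
          linarith
        exact_mod_cast this
      · exact hwcov j (Finset.mem_erase.mpr ⟨hjj, hj⟩)
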